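/- arXiv:1703.05814 — 3 statements merged into one kernel-verified Lean document; each statement's English description precedes it below -/
import Mathlib

section
/- Suppose the heat-flux input satisfies q_c(t) > 0 for all t in a finite time interval (0, t̄), and the initial temperature satisfies T(x,0) ≥ T_m for all x ∈ [0, s(0)]. Then the model-validity condition holds: T(x,t) ≥ T_m for all t ∈ (0, t̄) and all x ∈ [0, s(t)]. -/
open Set Filter Topology

/-- If `g` has derivative `c` at `t0` and `g t0` is a minimum from the left, then `c ≤ 0`. -/
lemma stefan_deriv_nonpos_of_min_left {g : ℝ → ℝ} {t0 c : ℝ} (h : HasDerivAt g c t0)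
    (hmin : ∀ᶠ τ in 𝓝[<] t0, g t0 ≤ g τ) : c ≤ 0 := by
  have hs : Filter.Tendsto (slope g t0) (𝓝[<] t0) (𝓝 c) :=
    (hasDerivAt_iff_tendsto_slope.mp h).mono_left
      (nhdsWithin_mono _ (fun x hx => ne_of_lt hx))
  refine le_of_tendsto hs ?_
  filter_upwards [hmin, self_mem_nhdsWithin] with τ h1 h2
  rw [slope_def_field]
  apply div_nonpos_of_nonneg_of_nonpos (by linarith)
  have : τ < t0 := h2
  linarith

/-- If `g` has derivative `c` at `t0` and `g t0` is a minimum from the right, then `0 ≤ c`. -/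
lemma stefan_deriv_nonneg_of_min_right {g : ℝ → ℝ} {t0 c : ℝ} (h : HasDerivAt g c t0)
    (hmin : ∀ᶠ τ in 𝓝[>] t0, g t0 ≤ g τ) : 0 ≤ c := by
  have hs : Filter.Tendsto (slope g t0) (𝓝[>] t0) (𝓝 c) :=
    (hasDerivAt_iff_tendsto_slope.mp h).mono_left
      (nhdsWithin_mono _ (fun x hx => ne_of_gt hx))
  refine ge_of_tendsto hs ?_
  filter_upwards [hmin, self_mem_nhdsWithin] with τ h1 h2
  rw [slope_def_field]
  apply div_nonneg (by linarith)
  have : t0 < τ := h2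
  linarith

/-- If the heat-flux input is positive on a finite time interval and the
initial temperature is at or above the melting temperature, then the model-validity
condition `T(x,t) ≥ T_m` holds on the whole moving domain. -/
theorem stefan_model_validity
    (α β k Tm tbar : ℝ) (T : ℝ → ℝ → ℝ) (s qc : ℝ → ℝ)
    (hα : 0 < α) (hβ : 0 < β) (hk : 0 < k) (htbar : 0 < tbar)
    (hs_pos : ∀ t ∈ Set.Icc (0:ℝ) tbar, 0 < s t)
    (hs_reg : ContDiffOn ℝ 1 s (Set.Icc 0 tbar))
    (hT_cont : ContinuousOn (fun p : ℝ × ℝ => T p.1 p.2)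
      {p : ℝ × ℝ | p.2 ∈ Set.Icc (0:ℝ) tbar ∧ p.1 ∈ Set.Icc 0 (s p.2)})
    (hT_xreg : ∀ t ∈ Set.Icc (0:ℝ) tbar, ContDiffOn ℝ 2 (fun x => T x t) (Set.Icc 0 (s t)))
    (hT_treg : ∀ t ∈ Set.Icc (0:ℝ) tbar, ∀ x ∈ Set.Icc (0:ℝ) (s t),
      DifferentiableAt ℝ (fun τ => T x τ) t)
    (hPDE : ∀ t ∈ Set.Icc (0:ℝ) tbar, ∀ x ∈ Set.Ioo (0:ℝ) (s t),
      deriv (fun τ => T x τ) t = α * deriv (deriv (fun y => T y t)) x)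
    (hBC : ∀ t ∈ Set.Icc (0:ℝ) tbar, -k * deriv (fun y => T y t) 0 = qc t)
    (hIF : ∀ t ∈ Set.Icc (0:ℝ) tbar, T (s t) t = Tm)
    (hStefan : ∀ t ∈ Set.Icc (0:ℝ) tbar, deriv s t = -β * deriv (fun y => T y t) (s t))
    (hq_pos : ∀ t ∈ Set.Ioo (0:ℝ) tbar, 0 < qc t)
    (hIC : ∀ x ∈ Set.Icc (0:ℝ) (s 0), Tm ≤ T x 0) :
    ∀ t ∈ Set.Ioo (0:ℝ) tbar, ∀ x ∈ Set.Icc (0:ℝ) (s t), Tm ≤ T x t := by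
  intro t ht x hx
  -- It suffices to prove the estimate with an `ε`-margin.
  have key : ∀ ε : ℝ, 0 < ε → Tm ≤ T x t + ε * t := by
    intro ε hε
    set D : Set (ℝ × ℝ) := {p : ℝ × ℝ | p.2 ∈ Set.Icc (0:ℝ) t ∧ p.1 ∈ Set.Icc 0 (s p.2)}
      with hD_def
    set v : ℝ × ℝ → ℝ := fun p => T p.1 p.2 - Tm + ε * p.2 with hv_def
    have hIccsub : Set.Icc (0:ℝ) t ⊆ Set.Icc (0:ℝ) tbar :=
      Set.Icc_subset_Icc le_rfl ht.2.le
    have hs_cont : ContinuousOn s (Set.Icc (0:ℝ) t) :=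
      hs_reg.continuousOn.mono hIccsub
    -- D is contained in the big domain
    have hDsub : D ⊆ {p : ℝ × ℝ | p.2 ∈ Set.Icc (0:ℝ) tbar ∧ p.1 ∈ Set.Icc 0 (s p.2)} := by
      intro p hp
      exact ⟨hIccsub hp.1, hp.2⟩
    -- a bound for s on [0, t]
    obtain ⟨τM, hτM, hτMmax⟩ :=
      isCompact_Icc.exists_isMaxOn (⟨0, le_rfl, ht.1.le⟩ : (Set.Icc (0:ℝ) t).Nonempty) hs_cont
    set M := s τM with hM_def
    -- D is closed
    have hclosed : IsClosed D := by
      have h1 : IsClosed {p : ℝ × ℝ | p.2 ∈ Set.Icc (0:ℝ) t} :=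
        (isClosed_Icc).preimage continuous_snd
      have hg : ContinuousOn (fun p : ℝ × ℝ => p.1 - s p.2)
          {p : ℝ × ℝ | p.2 ∈ Set.Icc (0:ℝ) t} :=
        continuous_fst.continuousOn.sub
          (hs_cont.comp continuous_snd.continuousOn (fun p hp => hp))
      have h2 : IsClosed ({p : ℝ × ℝ | p.2 ∈ Set.Icc (0:ℝ) t} ∩
          (fun p : ℝ × ℝ => p.1 - s p.2) ⁻¹' Set.Iic 0) :=
        hg.preimage_isClosed_of_isClosed h1 isClosed_Iic
      have h3 : IsClosed {p : ℝ × ℝ | 0 ≤ p.1} :=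
        (isClosed_Ici).preimage continuous_fst
      have : D = ({p : ℝ × ℝ | p.2 ∈ Set.Icc (0:ℝ) t} ∩
          (fun p : ℝ × ℝ => p.1 - s p.2) ⁻¹' Set.Iic 0) ∩ {p : ℝ × ℝ | 0 ≤ p.1} := by
        ext p
        simp only [hD_def, Set.mem_setOf_eq, Set.mem_inter_iff, Set.mem_preimage,
          Set.mem_Iic, Set.mem_Icc, sub_nonpos]
        tauto
      rw [this]
      exact (h2.inter h3)
    -- D is compact
    have hcomp : IsCompact D := by
      refine (isCompact_Icc.prod isCompact_Icc :
        IsCompact (Set.Icc (0:ℝ) M ×ˢ Set.Icc (0:ℝ) t)).of_isClosed_subset hclosed ?_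
      intro p hp
      refine ⟨⟨hp.2.1, le_trans hp.2.2 (hτMmax hp.1)⟩, hp.1⟩
    -- v is continuous on D
    have hvcont : ContinuousOn v D := by
      refine ContinuousOn.add (ContinuousOn.sub ?_ continuousOn_const) ?_
      · exact hT_cont.mono hDsub
      · exact (continuous_const.mul continuous_snd).continuousOn
    -- D is nonempty
    have hne : D.Nonempty := by
      refine ⟨(0, 0), ⟨⟨le_rfl, ht.1.le⟩, ⟨le_rfl, (hs_pos 0 ⟨le_rfl, htbar.le⟩).le⟩⟩⟩
    obtain ⟨p0, hp0D, hp0min'⟩ := hcomp.exists_isMinOn hne hvcont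
    obtain ⟨x0, t0⟩ := p0
    have hp0min : ∀ p ∈ D, T x0 t0 - Tm + ε * t0 ≤ T p.1 p.2 - Tm + ε * p.2 :=
      fun p hp => hp0min' hp
    have hp0D' : t0 ∈ Set.Icc (0:ℝ) t ∧ x0 ∈ Set.Icc (0:ℝ) (s t0) := hp0D
    obtain ⟨⟨ht00, ht0t⟩, hx00, hx0s⟩ := hp0D'
    have ht0mem : t0 ∈ Set.Icc (0:ℝ) tbar := ⟨ht00, le_trans ht0t ht.2.le⟩
    -- main claim: the minimum is nonnegative
    have hmin_nonneg : 0 ≤ T x0 t0 - Tm + ε * t0 := by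
      rcases eq_or_lt_of_le ht00 with ht0z | ht0pos
      · -- initial time
        rw [← ht0z] at hx0s ⊢
        have h1 : Tm ≤ T x0 0 := hIC x0 ⟨hx00, hx0s⟩
        nlinarith
      · rcases eq_or_lt_of_le hx0s with hx0eq | hx0lt
        · -- on the interface
          have h1 : T x0 t0 = Tm := by rw [hx0eq]; exact hIF t0 ht0mem
          rw [h1]
          nlinarith
        · exfalso
          set f : ℝ → ℝ := fun y => T y t0 with hf_def
          have hfC : ContDiffOn ℝ 2 f (Set.Icc 0 (s t0)) := hT_xreg t0 ht0mem
          rcases eq_or_lt_of_le hx00 with hx0z | hx0pos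
          · -- on the flux boundary: x0 = 0
            have ht0tbar : t0 ∈ Set.Ioo (0:ℝ) tbar := ⟨ht0pos, lt_of_le_of_lt ht0t ht.2⟩
            have hqc : 0 < qc t0 := hq_pos t0 ht0tbar
            have hder : deriv f 0 = -(qc t0) / k := by
              have := hBC t0 ht0mem
              field_simp
              linarith [this]
            have hderneg : deriv f 0 < 0 := by
              rw [hder]
              exact div_neg_of_neg_of_pos (by linarith) hk
            by_cases hdiff : DifferentiableAt ℝ f 0
            · have hmin_right : ∀ᶠ y in 𝓝[>] (0:ℝ), f 0 ≤ f y := by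
                have hIoo : Set.Ioo (0:ℝ) (s t0) ∈ 𝓝[>] (0:ℝ) :=
                  Ioo_mem_nhdsGT_of_mem ⟨le_rfl, hs_pos t0 ht0mem⟩
                filter_upwards [hIoo] with y hy
                have hyD : ((y, t0) : ℝ × ℝ) ∈ D :=
                  (⟨⟨ht00, ht0t⟩, hy.1.le, hy.2.le⟩ :
                    t0 ∈ Set.Icc (0:ℝ) t ∧ y ∈ Set.Icc (0:ℝ) (s t0))
                have h5 : T x0 t0 - Tm + ε * t0 ≤ T y t0 - Tm + ε * t0 := hp0min (y, t0) hyD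
                rw [← hx0z] at h5
                simp only [hf_def]
                linarith
              have := stefan_deriv_nonneg_of_min_right hdiff.hasDerivAt hmin_right
              linarith
            · rw [deriv_zero_of_not_differentiableAt hdiff] at hderneg
              exact absurd hderneg (lt_irrefl 0)
          · -- interior point
            have ht0lt : t0 < tbar := lt_of_le_of_lt ht0t ht.2
            -- time direction: left minimum gives deriv ≤ -ε
            have hsC : ContinuousAt s t0 :=
              hs_reg.continuousOn.continuousAt (Icc_mem_nhds ht0pos ht0lt)
            have hgd : DifferentiableAt ℝ (fun τ => T x0 τ) t0 :=
              hT_treg t0 ht0mem x0 ⟨hx00, hx0s⟩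
            have hG : HasDerivAt (fun τ => T x0 τ + ε * τ)
                (deriv (fun τ => T x0 τ) t0 + ε) t0 := by
              have h1 : HasDerivAt (fun τ : ℝ => ε * τ) ε t0 := by
                simpa using (hasDerivAt_id t0).const_mul ε
              exact hgd.hasDerivAt.add h1
            have hmin_left : ∀ᶠ τ in 𝓝[<] t0,
                T x0 t0 + ε * t0 ≤ T x0 τ + ε * τ := by
              have h1 : ∀ᶠ τ in 𝓝 t0, x0 < s τ := hsC.eventually (eventually_gt_nhds hx0lt)
              have h2 : ∀ᶠ τ in 𝓝 t0, 0 < τ := eventually_gt_nhds ht0pos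
              filter_upwards [h1.filter_mono nhdsWithin_le_nhds,
                h2.filter_mono nhdsWithin_le_nhds, self_mem_nhdsWithin] with τ hτ1 hτ2 hτ3
              have hτlt : τ < t0 := hτ3
              have hτD : ((x0, τ) : ℝ × ℝ) ∈ D :=
                (⟨⟨hτ2.le, le_trans hτlt.le ht0t⟩, hx00, hτ1.le⟩ :
                  τ ∈ Set.Icc (0:ℝ) t ∧ x0 ∈ Set.Icc (0:ℝ) (s τ))
              have h5 : T x0 t0 - Tm + ε * t0 ≤ T x0 τ - Tm + ε * τ := hp0min (x0, τ) hτD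
              linarith
            have hdert : deriv (fun τ => T x0 τ) t0 + ε ≤ 0 :=
              stefan_deriv_nonpos_of_min_left hG hmin_left
            -- PDE: α * f'' (x0) ≤ -ε < 0
            have hpde := hPDE t0 ht0mem x0 ⟨hx0pos, hx0lt⟩
            set c2 := deriv (deriv f) x0 with hc2_def
            have hc2neg : c2 < 0 := by
              have : α * c2 ≤ -ε := by rw [← hpde]; linarith
              nlinarith
            -- spatial direction: local minimum
            have hnb : Set.Icc (0:ℝ) (s t0) ∈ 𝓝 x0 := Icc_mem_nhds hx0pos hx0lt
            have hlm : IsLocalMin f x0 := by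
              filter_upwards [hnb] with y hy
              have hyD : ((y, t0) : ℝ × ℝ) ∈ D :=
                (⟨⟨ht00, ht0t⟩, hy⟩ :
                  t0 ∈ Set.Icc (0:ℝ) t ∧ y ∈ Set.Icc (0:ℝ) (s t0))
              have h5 : T x0 t0 - Tm + ε * t0 ≤ T y t0 - Tm + ε * t0 := hp0min (y, t0) hyD
              simp only [hf_def]
              linarith
            have hCA : ContDiffAt ℝ 2 f x0 := hfC.contDiffAt hnb
            obtain ⟨u, hu, huC⟩ := hCA.contDiffOn le_rfl (by norm_num)
            obtain ⟨w, hwu, hwopen, hxw⟩ := mem_nhds_iff.mp hu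
            have hfd1 : ContDiffOn ℝ 1 (deriv f) w :=
              (huC.mono hwu).deriv_of_isOpen hwopen (by norm_num)
            have hdd : DifferentiableAt ℝ (deriv f) x0 :=
              ((hfd1.differentiableOn (by norm_num)).differentiableAt (hwopen.mem_nhds hxw))
            have hD2 : HasDerivAt (deriv f) c2 x0 := hdd.hasDerivAt
            have hfdiff : DifferentiableAt ℝ f x0 := by
              have : ContDiffOn ℝ 2 f w := huC.mono hwu
              exact ((this.differentiableOn (by norm_num)).differentiableAt
                (hwopen.mem_nhds hxw))
            have hd0 : deriv f x0 = 0 := hlm.deriv_eq_zero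
            -- eventually deriv f y < 0 for y > x0
            have hsl : Filter.Tendsto (slope (deriv f) x0) (𝓝[>] x0) (𝓝 c2) :=
              (hasDerivAt_iff_tendsto_slope.mp hD2).mono_left
                (nhdsWithin_mono _ (fun y hy => ne_of_gt hy))
            have hev : ∀ᶠ y in 𝓝[>] x0, deriv f y < 0 := by
              filter_upwards [hsl.eventually (eventually_lt_nhds
                (show c2 < c2 / 2 by linarith)), self_mem_nhdsWithin] with y h1 h2
              have hy : x0 < y := h2
              rw [slope_def_field, hd0, sub_zero] at h1
              have h3 : deriv f y / (y - x0) < 0 := by linarith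
              rcases div_neg_iff.mp h3 with ⟨ha, hb⟩ | ⟨ha, hb⟩
              · linarith
              · exact ha
            obtain ⟨b, hb, hbsub⟩ := mem_nhdsGT_iff_exists_Ioo_subset.mp hev
            have hbx : x0 < b := hb
            set b' := min b (s t0) with hb'_def
            have hb'x : x0 < b' := lt_min hbx hx0lt
            set y1 := (x0 + b') / 2 with hy1_def
            have hy1a : x0 < y1 := by simp only [hy1_def]; linarith
            have hy1b : y1 < b' := by simp only [hy1_def]; linarith
            have hy1s : y1 < s t0 := lt_of_lt_of_le hy1b (min_le_right _ _)
            have hy1bb : y1 < b := lt_of_lt_of_le hy1b (min_le_left _ _)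
            have hanti : StrictAntiOn f (Set.Icc x0 y1) := by
              refine strictAntiOn_of_deriv_neg (convex_Icc x0 y1)
                (hfC.continuousOn.mono ?_) ?_
              · exact Set.Icc_subset_Icc hx00 hy1s.le
              · intro y hy
                rw [interior_Icc] at hy
                exact hbsub ⟨hy.1, lt_trans hy.2 hy1bb⟩
            have hflt : f y1 < f x0 :=
              hanti ⟨le_rfl, hy1a.le⟩ ⟨hy1a.le, le_rfl⟩ hy1a
            have hy1D : ((y1, t0) : ℝ × ℝ) ∈ D :=
              (⟨⟨ht00, ht0t⟩, le_trans hx00 hy1a.le, hy1s.le⟩ :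
                t0 ∈ Set.Icc (0:ℝ) t ∧ y1 ∈ Set.Icc (0:ℝ) (s t0))
            have h5 : T x0 t0 - Tm + ε * t0 ≤ T y1 t0 - Tm + ε * t0 := hp0min (y1, t0) hy1D
            simp only [hf_def] at hflt
            linarith
    -- conclude the ε-estimate
    have hxtD : ((x, t) : ℝ × ℝ) ∈ D :=
      (⟨⟨ht.1.le, le_rfl⟩, hx⟩ : t ∈ Set.Icc (0:ℝ) t ∧ x ∈ Set.Icc (0:ℝ) (s t))
    have h5 : T x0 t0 - Tm + ε * t0 ≤ T x t - Tm + ε * t := hp0min (x, t) hxtD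
    linarith
  refine le_of_forall_pos_le_add ?_
  intro ε hε
  have := key (ε / t) (div_pos hε ht.1)
  rwa [div_mul_cancel₀ _ (ne_of_gt ht.1)] at this
end

section
/- Let V, s : [0,∞) → ℝ be differentiable functions with V(t) ≥ 0, ṡ(t) ≥ 0, and 0 ≤ s(t) ≤ s_r for all t ≥ 0, and let a, b > 0 be constants such that V̇(t) ≤ −b V(t) + a ṡ(t) V(t) for all t ≥ 0. Then V(t) ≤ e^{a s_r} V(0) e^{−b t} for all t ≥ 0. -/
/-- Gronwall-type estimate: if `V̇ ≤ −b V + a ṡ V` with `V ≥ 0`, `ṡ ≥ 0`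
and `0 ≤ s ≤ s_r`, then `V(t) ≤ e^{a s_r} V(0) e^{−b t}`. -/
theorem lyapunov_moving_boundary_gronwall
    (V s : ℝ → ℝ) (a b s_r : ℝ)
    (ha : 0 < a) (hb : 0 < b) (hsr : 0 < s_r)
    (hV_diff : ∀ t ≥ (0:ℝ), DifferentiableAt ℝ V t)
    (hs_diff : ∀ t ≥ (0:ℝ), DifferentiableAt ℝ s t)
    (hV_nonneg : ∀ t ≥ (0:ℝ), 0 ≤ V t)
    (hs_mono : ∀ t ≥ (0:ℝ), 0 ≤ deriv s t)
    (hs_bound : ∀ t ≥ (0:ℝ), 0 ≤ s t ∧ s t ≤ s_r)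
    (hineq : ∀ t ≥ (0:ℝ), deriv V t ≤ -b * V t + a * deriv s t * V t) :
    ∀ t ≥ (0:ℝ), V t ≤ Real.exp (a * s_r) * V 0 * Real.exp (-b * t) := by
  set g : ℝ → ℝ := fun t => V t * Real.exp (b * t - a * s t) with hg
  have hgderiv : ∀ t ≥ (0:ℝ), HasDerivAt g
      (deriv V t * Real.exp (b * t - a * s t)
        + V t * ((b - a * deriv s t) * Real.exp (b * t - a * s t))) t := by
    intro t ht
    have hV : HasDerivAt V (deriv V t) t := (hV_diff t ht).hasDerivAt
    have hs : HasDerivAt s (deriv s t) t := (hs_diff t ht).hasDerivAt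
    have hin : HasDerivAt (fun t => b * t - a * s t) (b - a * deriv s t) t := by
      simpa [Pi.sub_def] using ((hasDerivAt_id t).const_mul b).sub (hs.const_mul a)
    simpa [mul_comm, Pi.mul_def] using hV.mul hin.exp
  have hgdiff : ∀ t ∈ Set.Ici (0:ℝ), DifferentiableAt ℝ g t :=
    fun t ht => (hgderiv t ht).differentiableAt
  have hanti : AntitoneOn g (Set.Ici (0:ℝ)) := by
    apply antitoneOn_of_deriv_nonpos (convex_Ici 0)
    · exact continuousOn_of_forall_continuousAt fun t ht => (hgdiff t ht).continuousAt
    · exact fun t ht => (hgdiff t (interior_subset ht)).differentiableWithinAt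
    · intro t ht
      rw [interior_Ici] at ht
      have ht' : (0:ℝ) ≤ t := le_of_lt ht
      rw [(hgderiv t ht').deriv]
      have hexp : 0 < Real.exp (b * t - a * s t) := Real.exp_pos _
      have key : deriv V t + V t * (b - a * deriv s t) ≤ 0 := by
        have := hineq t ht'
        nlinarith
      nlinarith
  intro t ht
  have h1 : g t ≤ g 0 := hanti Set.self_mem_Ici ht ht
  have hg0 : g 0 ≤ V 0 := by
    have hs0 := (hs_bound 0 le_rfl).1
    have : Real.exp (b * 0 - a * s 0) ≤ 1 := by
      rw [Real.exp_le_one_iff]; nlinarith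
    have hV0 := hV_nonneg 0 le_rfl
    calc g 0 = V 0 * Real.exp (b * 0 - a * s 0) := rfl
      _ ≤ V 0 * 1 := by nlinarith
      _ = V 0 := mul_one _
  have hgt : g t ≤ V 0 := h1.trans hg0
  have hVt : V t = g t * Real.exp (a * s t - b * t) := by
    rw [hg, mul_assoc, ← Real.exp_add]
    ring_nf
    simp
  rw [hVt]
  have hexp2 : (0:ℝ) < Real.exp (a * s t - b * t) := Real.exp_pos _
  have h2 : g t * Real.exp (a * s t - b * t) ≤ V 0 * Real.exp (a * s t - b * t) := by
    exact mul_le_mul_of_nonneg_right hgt hexp2.le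
  have h3 : Real.exp (a * s t - b * t) ≤ Real.exp (a * s_r) * Real.exp (-b * t) := by
    rw [← Real.exp_add, Real.exp_le_exp]
    have := (hs_bound t ht).2
    nlinarith
  have hV0 := hV_nonneg 0 le_rfl
  calc g t * Real.exp (a * s t - b * t) ≤ V 0 * Real.exp (a * s t - b * t) := h2
    _ ≤ V 0 * (Real.exp (a * s_r) * Real.exp (-b * t)) := by
        exact mul_le_mul_of_nonneg_left h3 hV0
    _ = Real.exp (a * s_r) * V 0 * Real.exp (-b * t) := by ring
end

section
/- Fix c, α, β > 0, s_r > 0, p > 0, and let 0 < s ≤ s_r. For continuously differentiable functions u, w : [0, s] → ℝ and X ∈ ℝ related by the backstepping transformation w(x) = u(x) − (c/α)∫_x^{s} (x − y) u(y) dy − (c/β)(x − s) X, there exist constants δ̲ > 0 and δ̄ > 0, depending only on c, α, β, s_r and p (not on s, u, w, X), such that δ̲ ( ∫₀^{s} u(x)² dx + ∫₀^{s} u'(x)² dx + X² ) ≤ ∫₀^{s} w(x)² dx + ∫₀^{s} w'(x)² dx + p X² ≤ δ̄ ( ∫₀^{s} u(x)² dx + ∫₀^{s} u'(x)² dx + X²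 ). -/
open Set MeasureTheory intervalIntegral Real

lemma bs_ext {s : ℝ} (hs : 0 ≤ s) {f : ℝ → ℝ} (hf : ContinuousOn f (Set.Icc 0 s)) :
    ∃ F : ℝ → ℝ, Continuous F ∧ Set.EqOn f F (Set.Icc 0 s) := by
  refine ⟨Set.IccExtend hs (fun x : Set.Icc 0 s => f x), ?_, ?_⟩
  · exact (ContinuousOn.restrict hf).Icc_extend'
  · intro x hx
    simp [Set.IccExtend_of_mem hs _ hx]

lemma bs_subint {a b c d : ℝ} {h : ℝ → ℝ} (hh : Continuous h) (h0 : ∀ x, 0 ≤ h x)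
    (hca : c ≤ a) (hab : a ≤ b) (hbd : b ≤ d) :
    ∫ x in a..b, h x ≤ ∫ x in c..d, h x := by
  have i1 : ∫ x in c..d, h x = (∫ x in c..a, h x) + ((∫ x in a..b, h x) + (∫ x in b..d, h x)) := by
    rw [integral_add_adjacent_intervals (hh.intervalIntegrable _ _) (hh.intervalIntegrable _ _),
      integral_add_adjacent_intervals (hh.intervalIntegrable _ _) (hh.intervalIntegrable _ _)]
  have n1 : 0 ≤ ∫ x in c..a, h x := intervalIntegral.integral_nonneg hca (fun x _ => h0 x)
  have n2 : 0 ≤ ∫ x in b..d, h x := intervalIntegral.integral_nonneg hbd (fun x _ => h0 x)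
  linarith

lemma bs_cs {a b : ℝ} (hab : a ≤ b) {f : ℝ → ℝ} (hf : Continuous f) :
    (∫ x in a..b, |f x|) ^ 2 ≤ (b - a) * ∫ x in a..b, (f x) ^ 2 := by
  set I := ∫ x in a..b, |f x| with hI
  set S := ∫ x in a..b, (f x) ^ 2 with hS
  have hSnn : 0 ≤ S := intervalIntegral.integral_nonneg hab (fun x _ => sq_nonneg _)
  have key : ∀ x, |f x| * I ≤ ((f x)^2 * (b - a) + S) / 2 := by
    intro x
    have h1 : |f x| * I = ∫ y in a..b, |f x| * |f y| := by
      rw [intervalIntegral.integral_const_mul]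
    have h2 : (∫ y in a..b, |f x| * |f y|) ≤ ∫ y in a..b, ((f x)^2 + (f y)^2)/2 := by
      refine intervalIntegral.integral_mono_on hab
        ((continuous_const.mul hf.abs).intervalIntegrable a b)
        (((continuous_const.add (hf.pow 2)).div_const 2).intervalIntegrable a b) ?_
      intro y _
      nlinarith [sq_nonneg (|f x| - |f y|), sq_abs (f x), sq_abs (f y)]
    have h3 : (∫ y in a..b, ((f x)^2 + (f y)^2)/2) = ((f x)^2 * (b - a) + S) / 2 := by
      rw [show (fun y => ((f x)^2 + (f y)^2)/2) = (fun y => ((f x)^2 + (f y)^2) * (1/2 : ℝ)) by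
            funext y; ring]
      rw [intervalIntegral.integral_mul_const, intervalIntegral.integral_add
        (intervalIntegrable_const) ((show Continuous fun y => f y ^ 2 from hf.pow 2).intervalIntegrable a b),
        intervalIntegral.integral_const]
      simp [hS]
      ring
    rw [h1]; rw [h3] at h2; exact h2
  have h4 : I * I ≤ ∫ x in a..b, ((f x)^2 * (b - a) + S) / 2 := by
    have : I * I = ∫ x in a..b, |f x| * I := by rw [intervalIntegral.integral_mul_const]
    rw [this]
    refine intervalIntegral.integral_mono_on hab
      ((hf.abs.mul continuous_const).intervalIntegrable a b)
      ((((hf.pow 2).mul continuous_const).add continuous_const).div_const 2 |>.intervalIntegrable a b) (fun x _ => key x)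
  have h5 : (∫ x in a..b, ((f x)^2 * (b - a) + S) / 2) = (b - a) * S := by
    rw [show (fun x => ((f x)^2 * (b - a) + S) / 2) = (fun x => ((f x)^2 * (b - a) + S) * (1/2:ℝ)) by
          funext x; ring]
    rw [intervalIntegral.integral_mul_const, intervalIntegral.integral_add
      ((show Continuous fun x => f x ^ 2 * (b - a) from (hf.pow 2).mul continuous_const).intervalIntegrable a b) intervalIntegrable_const,
      intervalIntegral.integral_mul_const, intervalIntegral.integral_const]
    simp [hS]
    ring
  calc I^2 = I * I := sq I
    _ ≤ (b-a) * S := by rw [← h5]; exact h4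

lemma bs_gronwall {s K G : ℝ} (hs : 0 < s) (hK : 0 < K) (hG : 0 ≤ G) {U : ℝ → ℝ}
    (hU : Continuous U)
    (hrel : ∀ x ∈ Set.Icc 0 s, |U x| ≤ G + K * ∫ y in x..s, |U y|) :
    ∀ x ∈ Set.Icc 0 s, |U x| ≤ G * Real.exp (K * s) := by
  set v : ℝ → ℝ := fun τ => |U (s - τ)| with hv
  have hvc : Continuous v := (hU.comp (continuous_const.sub continuous_id)).abs
  set φ : ℝ → ℝ := fun t => ∫ τ in (0:ℝ)..t, v τ with hφ
  have hφ' : ∀ t, HasDerivAt φ (v t) t := fun t =>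
    intervalIntegral.integral_hasDerivAt_right (hvc.intervalIntegrable 0 t)
      (hvc.stronglyMeasurableAtFilter _ _) hvc.continuousAt
  have hφc : Continuous φ := by
    rw [continuous_iff_continuousAt]; exact fun t => (hφ' t).continuousAt
  have hφint : ∀ t, φ t = ∫ y in (s - t)..s, |U y| := by
    intro t
    have := intervalIntegral.integral_comp_sub_left (a := (0:ℝ)) (b := t) (fun y => |U y|) s
    simpa [hφ, hv] using this
  have hφnn : ∀ t ∈ Set.Icc (0:ℝ) s, 0 ≤ φ t := fun t ht =>
    intervalIntegral.integral_nonneg ht.1 (fun τ _ => abs_nonneg _)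
  have bound : ∀ t ∈ Set.Ico (0:ℝ) s, ‖v t‖ ≤ K * ‖φ t‖ + G := by
    intro t ht
    have hx : s - t ∈ Set.Icc (0:ℝ) s := by
      constructor <;> [linarith [ht.2]; linarith [ht.1]]
    have h1 := hrel (s - t) hx
    rw [← hφint t] at h1
    have h2 : ‖v t‖ = |U (s - t)| := by simp [hv, abs_abs]
    have h3 : ‖φ t‖ = φ t := abs_of_nonneg (hφnn t ⟨ht.1, ht.2.le⟩)
    rw [h2, h3]; linarith
  have gron := norm_le_gronwallBound_of_norm_deriv_right_le (f := φ) (f' := v)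
    (δ := 0) (K := K) (ε := G) (a := 0) (b := s) hφc.continuousOn
    (fun x _ => (hφ' x).hasDerivWithinAt) (by simp [hφ]) bound
  have hgb : ∀ t, gronwallBound 0 K G t = G / K * (Real.exp (K * t) - 1) := by
    intro t; rw [gronwallBound_of_K_ne_0 hK.ne']; ring
  intro x hx
  have ht : s - x ∈ Set.Icc (0:ℝ) s := by
    constructor <;> [linarith [hx.2]; linarith [hx.1]]
  have h1 := hrel x hx
  have h2 : ∫ y in x..s, |U y| = φ (s - x) := by
    rw [hφint (s - x)]; norm_num
  rw [h2] at h1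
  have h3 := gron (s - x) ht
  rw [sub_zero, hgb] at h3
  have h5 : ‖φ (s - x)‖ = φ (s - x) := abs_of_nonneg (hφnn _ ht)
  rw [h5] at h3
  have hexp : (1:ℝ) ≤ Real.exp (K * s) := by
    rw [show (1:ℝ) = Real.exp 0 by simp]; apply Real.exp_le_exp.mpr; positivity
  have hmono : Real.exp (K * (s - x)) ≤ Real.exp (K * s) := by
    apply Real.exp_le_exp.mpr; nlinarith [hx.1]
  have hGK : 0 ≤ G / K := div_nonneg hG hK.le
  have h4 : φ (s - x) ≤ G / K * (Real.exp (K * s) - 1) := by nlinarith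
  have h6 : K * φ (s - x) ≤ G * (Real.exp (K * s) - 1) := by
    calc K * φ (s - x) ≤ K * (G / K * (Real.exp (K * s) - 1)) :=
          mul_le_mul_of_nonneg_left h4 hK.le
      _ = G * (Real.exp (K * s) - 1) := by field_simp
  linarith

lemma bs_agmon {s : ℝ} (hs : 0 < s) {f g : ℝ → ℝ} (hf : Continuous f) (hg : Continuous g)
    (hder : ∀ x ∈ Set.Ioo (0:ℝ) s, HasDerivAt f (g x) x) :
    ∀ x ∈ Set.Icc (0:ℝ) s, s * (f x)^2 ≤
      (∫ t in (0:ℝ)..s, (f t)^2) + s * ((∫ t in (0:ℝ)..s, (f t)^2) + ∫ t in (0:ℝ)..s, (g t)^2) := by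
  obtain ⟨x₀, hx₀, hmin⟩ := isCompact_Icc.exists_isMinOn (Set.nonempty_Icc.mpr hs.le)
    ((hf.pow 2).continuousOn : ContinuousOn (fun t => (f t)^2) (Set.Icc 0 s))
  have hm : s * (f x₀)^2 ≤ ∫ t in (0:ℝ)..s, (f t)^2 := by
    have := intervalIntegral.integral_mono_on (μ := MeasureTheory.volume) hs.le
      (_root_.intervalIntegrable_const (c := (f x₀)^2))
      ((hf.pow 2).intervalIntegrable 0 s) (fun t ht => hmin ht)
    simpa using this
  have habs : Continuous (fun t => |2 * f t * g t|) :=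
    ((continuous_const.mul hf).mul hg).abs
  have hIabs : (∫ t in (0:ℝ)..s, |2 * f t * g t|) ≤
      (∫ t in (0:ℝ)..s, (f t)^2) + ∫ t in (0:ℝ)..s, (g t)^2 := by
    rw [← intervalIntegral.integral_add ((show Continuous fun t => f t ^ 2 from hf.pow 2).intervalIntegrable 0 s)
      ((show Continuous fun t => g t ^ 2 from hg.pow 2).intervalIntegrable 0 s)]
    refine intervalIntegral.integral_mono_on hs.le (habs.intervalIntegrable 0 s)
      (((hf.pow 2).add (hg.pow 2)).intervalIntegrable 0 s) ?_
    intro t _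
    rw [abs_mul, abs_mul]
    nlinarith [sq_nonneg (|f t| - |g t|), sq_abs (f t), sq_abs (g t), abs_nonneg (f t),
      abs_nonneg (g t), abs_of_nonneg (show (0:ℝ) ≤ 2 by norm_num)]
  intro x hx
  have hftc : (f x)^2 - (f x₀)^2 = ∫ t in x₀..x, 2 * f t * g t := by
    rw [intervalIntegral.integral_eq_sub_of_hasDeriv_right
      ((hf.pow 2).continuousOn) ?_ ((show Continuous fun t => 2 * f t * g t from (continuous_const.mul hf).mul hg).intervalIntegrable x₀ x)]
    · rfl
    intro t ht
    have ht' : t ∈ Set.Ioo (0:ℝ) s := by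
      constructor
      · exact lt_of_le_of_lt (le_min hx₀.1 hx.1) ht.1
      · exact lt_of_lt_of_le ht.2 (max_le hx₀.2 hx.2)
    have h2 := ((hder t ht').pow 2).hasDerivWithinAt (s := Set.Ioi t)
    convert h2 using 1
    norm_num
  have key : |(f x)^2 - (f x₀)^2| ≤ ∫ t in (0:ℝ)..s, |2 * f t * g t| := by
    rw [hftc]
    rcases le_total x₀ x with h | h
    · calc |∫ t in x₀..x, 2 * f t * g t| ≤ ∫ t in x₀..x, |2 * f t * g t| :=
            intervalIntegral.abs_integral_le_integral_abs h
        _ ≤ _ := bs_subint habs (fun t => abs_nonneg _) hx₀.1 h hx.2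
    · rw [intervalIntegral.integral_symm, abs_neg]
      calc |∫ t in x..x₀, 2 * f t * g t| ≤ ∫ t in x..x₀, |2 * f t * g t| :=
            intervalIntegral.abs_integral_le_integral_abs h
        _ ≤ _ := bs_subint habs (fun t => abs_nonneg _) hx.1 h hx₀.2
  have h1 : (f x)^2 ≤ (f x₀)^2 +
      ((∫ t in (0:ℝ)..s, (f t)^2) + ∫ t in (0:ℝ)..s, (g t)^2) := by
    have := abs_le.mp (key.trans hIabs) |>.2
    · linarith [le_abs_self ((f x)^2 - (f x₀)^2), key.trans hIabs]
  have h2 := mul_le_mul_of_nonneg_left h1 hs.le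
  nlinarith [hm]

lemma bs_ae_ne (c : ℝ) : ∀ᵐ (x : ℝ), x ≠ c := by
  rw [MeasureTheory.ae_iff]
  have : {x : ℝ | ¬x ≠ c} = {c} := by ext x; simp
  rw [this]
  exact measure_singleton c

lemma bs_integral_congr_Ioo {s : ℝ} (hs : 0 ≤ s) {f g : ℝ → ℝ}
    (h : ∀ x ∈ Set.Ioo (0:ℝ) s, f x = g x) :
    ∫ x in (0:ℝ)..s, f x = ∫ x in (0:ℝ)..s, g x := by
  apply intervalIntegral.integral_congr_ae
  filter_upwards [bs_ae_ne s] with x hx hmem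
  rw [Set.uIoc_of_le hs] at hmem
  exact h x ⟨hmem.1, lt_of_le_of_ne hmem.2 hx⟩

lemma bs_integral_mono_Ioo {s : ℝ} (hs : 0 ≤ s) {f g : ℝ → ℝ}
    (hfi : IntervalIntegrable f MeasureTheory.volume 0 s)
    (hgi : IntervalIntegrable g MeasureTheory.volume 0 s)
    (h : ∀ x ∈ Set.Ioo (0:ℝ) s, f x ≤ g x) :
    ∫ x in (0:ℝ)..s, f x ≤ ∫ x in (0:ℝ)..s, g x := by
  apply intervalIntegral.integral_mono_ae_restrict hs hfi hgi
  have h0 := MeasureTheory.ae_restrict_of_ae (μ := MeasureTheory.volume)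
    (s := Set.Icc (0:ℝ) s) (bs_ae_ne 0)
  have h1 := MeasureTheory.ae_restrict_of_ae (μ := MeasureTheory.volume)
    (s := Set.Icc (0:ℝ) s) (bs_ae_ne s)
  have h2 := MeasureTheory.ae_restrict_mem (μ := MeasureTheory.volume)
    (measurableSet_Icc : MeasurableSet (Set.Icc (0:ℝ) s))
  filter_upwards [h0, h1, h2] with x hx0 hxs hxm
  exact h x ⟨lt_of_le_of_ne hxm.1 (Ne.symm hx0), lt_of_le_of_ne hxm.2 hxs⟩

lemma bs_deriv_rel {s A B X : ℝ} (hs : 0 < s) {u w Fu Gu Gw : ℝ → ℝ}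
    (hu : ContDiffOn ℝ 1 u (Set.Icc 0 s)) (hw : ContDiffOn ℝ 1 w (Set.Icc 0 s))
    (hFu : Continuous Fu) (hFue : Set.EqOn u Fu (Set.Icc 0 s))
    (hGue : Set.EqOn (derivWithin u (Set.Icc 0 s)) Gu (Set.Icc 0 s))
    (hGwe : Set.EqOn (derivWithin w (Set.Icc 0 s)) Gw (Set.Icc 0 s))
    (hrel : ∀ x ∈ Set.Icc (0:ℝ) s,
      w x = u x - A * (∫ y in x..s, (x - y) * u y) - B * (x - s) * X) :
    ∀ x ∈ Set.Ioo (0:ℝ) s, deriv w x = Gw x ∧ deriv u x = Gu x ∧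
      Gw x = Gu x - A * (∫ y in x..s, Fu y) - B * X := by
  have hΦeq : ∀ t ∈ Set.Icc (0:ℝ) s,
      w t = Fu t - A * (t * (∫ y in t..s, Fu y) - ∫ y in t..s, y * Fu y) - B * (t - s) * X := by
    intro t ht
    have e1 : (∫ y in t..s, (t - y) * u y) = ∫ y in t..s, (t - y) * Fu y := by
      apply intervalIntegral.integral_congr
      intro y hy
      rw [Set.uIcc_of_le ht.2] at hy
      have : y ∈ Set.Icc (0:ℝ) s := ⟨le_trans ht.1 hy.1, hy.2⟩
      simp [hFue this]
    have e2 : (∫ y in t..s, (t - y) * Fu y)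
        = t * (∫ y in t..s, Fu y) - ∫ y in t..s, y * Fu y := by
      have step : (∫ y in t..s, (t - y) * Fu y) = ∫ y in t..s, (t * Fu y - y * Fu y) := by
        apply intervalIntegral.integral_congr; intro y _; ring
      rw [step, intervalIntegral.integral_sub
        ((show Continuous fun y => t * Fu y from continuous_const.mul hFu).intervalIntegrable t s)
        ((Continuous.intervalIntegrable (by fun_prop : Continuous (fun y : ℝ => y * Fu y))) t s),
        intervalIntegral.integral_const_mul]
    rw [hrel t ht, hFue ht, e1, e2]
  intro x hx
  have hxIcc : x ∈ Set.Icc (0:ℝ) s := ⟨hx.1.le, hx.2.le⟩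
  have hnx : Set.Icc (0:ℝ) s ∈ nhds x := Icc_mem_nhds hx.1 hx.2
  have hdu : DifferentiableAt ℝ u x :=
    ((hu.differentiableOn one_ne_zero) x hxIcc).differentiableAt hnx
  have hdw : DifferentiableAt ℝ w x :=
    ((hw.differentiableOn one_ne_zero) x hxIcc).differentiableAt hnx
  have hu_eq : deriv u x = Gu x := by
    rw [← derivWithin_of_mem_nhds hnx]; exact hGue hxIcc
  have hw_eq : deriv w x = Gw x := by
    rw [← derivWithin_of_mem_nhds hnx]; exact hGwe hxIcc
  refine ⟨hw_eq, hu_eq, ?_⟩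
  -- derivative of Φ
  have hFu' : HasDerivAt Fu (Gu x) x := by
    have h1 : HasDerivAt u (Gu x) x := hu_eq ▸ hdu.hasDerivAt
    exact h1.congr_of_eventuallyEq
      (Filter.eventually_of_mem hnx (fun y hy => (hFue hy).symm)) |>.congr_of_eventuallyEq
      (Filter.EventuallyEq.refl _ _)
  have hJ : HasDerivAt (fun t => ∫ y in t..s, Fu y) (-(Fu x)) x := by
    have base : HasDerivAt (fun t => ∫ y in s..t, Fu y) (Fu x) x :=
      intervalIntegral.integral_hasDerivAt_right (hFu.intervalIntegrable s x)
        (hFu.stronglyMeasurableAtFilter _ _) hFu.continuousAt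
    have : (fun t => ∫ y in t..s, Fu y) = fun t => -(∫ y in s..t, Fu y) := by
      funext t; rw [intervalIntegral.integral_symm]
    rw [this]; exact base.neg
  have hK : HasDerivAt (fun t => ∫ y in t..s, y * Fu y) (-(x * Fu x)) x := by
    have base : HasDerivAt (fun t => ∫ y in s..t, y * Fu y) (x * Fu x) x :=
      intervalIntegral.integral_hasDerivAt_right
        ((continuous_id.mul hFu).intervalIntegrable s x)
        ((continuous_id.mul hFu).stronglyMeasurableAtFilter _ _)
        (continuous_id.mul hFu).continuousAt
    have : (fun t => ∫ y in t..s, y * Fu y) = fun t => -(∫ y in s..t, y * Fu y) := by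
      funext t; rw [intervalIntegral.integral_symm]
    rw [this]; exact base.neg
  have hΦ : HasDerivAt
      (fun t => Fu t - A * (t * (∫ y in t..s, Fu y) - ∫ y in t..s, y * Fu y) - B * (t - s) * X)
      (Gu x - A * (∫ y in x..s, Fu y) - B * X) x := by
    have hmul : HasDerivAt (fun t => t * (∫ y in t..s, Fu y))
        (1 * (∫ y in x..s, Fu y) + x * -(Fu x)) x := (hasDerivAt_id x).mul hJ
    have hlin : HasDerivAt (fun t => B * (t - s) * X) (B * X) x := by
      have : HasDerivAt (fun t => B * (t - s) * X) (B * 1 * X) x :=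
        (((hasDerivAt_id x).sub_const s).const_mul B).mul_const X
      simpa using this
    have := (hFu'.sub ((hmul.sub hK).const_mul A)).sub hlin
    exact this.congr_deriv (by ring)
  have hweq : w =ᶠ[nhds x]
      (fun t => Fu t - A * (t * (∫ y in t..s, Fu y) - ∫ y in t..s, y * Fu y) - B * (t - s) * X) :=
    Filter.eventually_of_mem hnx (fun y hy => hΦeq y hy)
  have hd : deriv w x = Gu x - A * (∫ y in x..s, Fu y) - B * X := by
    rw [hweq.deriv_eq]; exact hΦ.deriv
  rw [← hw_eq, hd]

lemma bs_sq_le {y b : ℝ} (hb : 0 ≤ b) (h : |y| ≤ b) : y^2 ≤ b^2 := by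
  nlinarith [sq_abs y, abs_nonneg y]

lemma bs_sq3 (a b d : ℝ) : (a - b - d)^2 ≤ 3*a^2 + 3*b^2 + 3*d^2 := by
  nlinarith [sq_nonneg (a+b), sq_nonneg (a+d), sq_nonneg (b-d)]

lemma bs_sq3' (a b d : ℝ) : (a + b + d)^2 ≤ 3*a^2 + 3*b^2 + 3*d^2 := by
  nlinarith [sq_nonneg (a-b), sq_nonneg (a-d), sq_nonneg (b+d)]

lemma bs_sq2 (a b : ℝ) : (a + b)^2 ≤ 2*a^2 + 2*b^2 := by
  nlinarith [sq_nonneg (a-b)]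

lemma bs_cs_int {s sr : ℝ} (hssr : s ≤ sr) {Fu : ℝ → ℝ} (hFuc : Continuous Fu)
    {Su : ℝ} (hSu : Su = ∫ x in (0:ℝ)..s, (Fu x)^2) :
    ∀ x ∈ Set.Icc (0:ℝ) s, (∫ y in x..s, |Fu y|)^2 ≤ sr * Su := by
  intro x hx
  have h1 := bs_cs hx.2 hFuc
  have h2 : (∫ y in x..s, (Fu y)^2) ≤ Su := by
    rw [hSu]
    exact bs_subint (hFuc.pow 2) (fun y => sq_nonneg _) hx.1 hx.2 le_rfl
  have h3 : 0 ≤ ∫ y in x..s, (Fu y)^2 :=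
    intervalIntegral.integral_nonneg hx.2 (fun y _ => sq_nonneg _)
  nlinarith [hx.1, hx.2]

lemma bs_int_const_bound {s C : ℝ} (hs : 0 < s) (hC : 0 ≤ C)
    {f g : ℝ → ℝ} (hf : Continuous f) (hg : Continuous g)
    (hb : ∀ x ∈ Set.Ioo (0:ℝ) s, (g x)^2 ≤ 3 * (f x)^2 + C) :
    (∫ x in (0:ℝ)..s, (g x)^2) ≤ 3 * (∫ x in (0:ℝ)..s, (f x)^2) + s * C := by
  have h1 : (∫ x in (0:ℝ)..s, (g x)^2) ≤ ∫ x in (0:ℝ)..s, (3 * (f x)^2 + C) := by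
    apply bs_integral_mono_Ioo hs.le ((hg.pow 2).intervalIntegrable 0 s)
      (((continuous_const.mul (hf.pow 2)).add continuous_const).intervalIntegrable 0 s) hb
  have h2 : (∫ x in (0:ℝ)..s, (3 * (f x)^2 + C))
      = 3 * (∫ x in (0:ℝ)..s, (f x)^2) + s * C := by
    rw [intervalIntegral.integral_add ((show Continuous fun x => 3 * f x ^ 2 from continuous_const.mul (hf.pow 2)).intervalIntegrable 0 s)
      intervalIntegrable_const, intervalIntegral.integral_const_mul,
      intervalIntegral.integral_const]
    simp
  linarith

set_option maxHeartbeats 2000000 in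
/-- Norm equivalence between the original state `(u, X)` and the
backstepping-transformed state `(w, X)`, with constants independent of the domain
length `s ∈ (0, s_r]` and of the particular functions. -/
theorem backstepping_norm_equivalence
    (c α β s_r p : ℝ)
    (hc : 0 < c) (hα : 0 < α) (hβ : 0 < β) (hsr : 0 < s_r) (hp : 0 < p) :
    ∃ δl δu : ℝ, 0 < δl ∧ 0 < δu ∧
      ∀ (s : ℝ) (u w : ℝ → ℝ) (X : ℝ),
        0 < s → s ≤ s_r →
        ContDiffOn ℝ 1 u (Set.Icc 0 s) →
        ContDiffOn ℝ 1 w (Set.Icc 0 s) →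
        (∀ x ∈ Set.Icc (0:ℝ) s,
          w x = u x - (c/α) * (∫ y in x..s, (x - y) * u y) - (c/β) * (x - s) * X) →
        δl * ((∫ x in (0:ℝ)..s, (u x)^2) + (∫ x in (0:ℝ)..s, (deriv u x)^2) + X^2) ≤
            (∫ x in (0:ℝ)..s, (w x)^2) + (∫ x in (0:ℝ)..s, (deriv w x)^2) + p * X^2 ∧
          (∫ x in (0:ℝ)..s, (w x)^2) + (∫ x in (0:ℝ)..s, (deriv w x)^2) + p * X^2 ≤
            δu * ((∫ x in (0:ℝ)..s, (u x)^2) + (∫ x in (0:ℝ)..s, (deriv u x)^2) + X^2) := by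
  obtain ⟨A, hA⟩ : ∃ x : ℝ, x = c / α := ⟨_, rfl⟩
  obtain ⟨B, hB⟩ : ∃ x : ℝ, x = c / β := ⟨_, rfl⟩
  have hApos : 0 < A := by rw [hA]; exact div_pos hc hα
  have hBpos : 0 < B := by rw [hB]; exact div_pos hc hβ
  obtain ⟨K, hK⟩ : ∃ x : ℝ, x = A * s_r := ⟨_, rfl⟩
  have hKpos : 0 < K := by rw [hK]; exact mul_pos hApos hsr
  obtain ⟨E, hE⟩ : ∃ x : ℝ, x = Real.exp (K * s_r) := ⟨_, rfl⟩
  have hEpos : 0 < E := by rw [hE]; exact Real.exp_pos _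
  have h1sr : (0:ℝ) < 1 + s_r := by linarith
  obtain ⟨D1, hD1⟩ : ∃ x : ℝ, x = (1 + 3*K^2) * E^2 * 2 * (1+s_r) + 3 := ⟨_, rfl⟩
  obtain ⟨D2, hD2⟩ : ∃ x : ℝ, x = (1 + 3*K^2) * E^2 * (2*B^2*s_r^3) + 3*B^2*s_r + 1 := ⟨_, rfl⟩
  have hD1pos : 0 < D1 := by
    rw [hD1]
    have h1 : (0:ℝ) ≤ (1 + 3*K^2) * E^2 * 2 := by positivity
    have h2 : (0:ℝ) ≤ (1 + 3*K^2) * E^2 * 2 * (1+s_r) := mul_nonneg h1 h1sr.le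
    linarith only [h2]
  have hD2pos : 0 < D2 := by
    rw [hD2]
    have h1 : (0:ℝ) ≤ (1 + 3*K^2) * E^2 * (2*B^2) := by positivity
    have h2 : (0:ℝ) ≤ s_r^3 := by positivity
    have h3 : (0:ℝ) ≤ 3*B^2*s_r := by positivity
    have h4 : (0:ℝ) ≤ ((1 + 3*K^2) * E^2 * (2*B^2)) * s_r^3 := mul_nonneg h1 h2
    linarith only [h3, h4]
  obtain ⟨Cl, hCl⟩ : ∃ x : ℝ, x = D1 + D2 / p := ⟨_, rfl⟩
  have hClpos : 0 < Cl := by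
    rw [hCl]; exact add_pos hD1pos (div_pos hD2pos hp)
  obtain ⟨δu, hδu⟩ : ∃ x : ℝ, x = 6 + 3*A^2*s_r^4 + 3*A^2*s_r^2 + 3*B^2*s_r^3 + 3*B^2*s_r + p := ⟨_, rfl⟩
  have hδupos : 0 < δu := by
    rw [hδu]
    have h1 : (0:ℝ) ≤ 3*A^2*s_r^4 := by positivity
    have h2 : (0:ℝ) ≤ 3*A^2*s_r^2 := by positivity
    have h3 : (0:ℝ) ≤ 3*B^2*s_r^3 := by positivity
    have h4 : (0:ℝ) ≤ 3*B^2*s_r := by positivity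
    linarith
  refine ⟨1 / Cl, δu, one_div_pos.mpr hClpos, hδupos, ?_⟩
  intro s u w X hs hssr hu hw hrel
  replace hrel : ∀ x ∈ Set.Icc (0:ℝ) s,
      w x = u x - A * (∫ y in x..s, (x - y) * u y) - B * (x - s) * X := by
    intro x hx
    rw [hA, hB]
    exact hrel x hx
  obtain ⟨Fu, hFuc, hFue⟩ := bs_ext hs.le (hu.continuousOn)
  obtain ⟨Fw, hFwc, hFwe⟩ := bs_ext hs.le (hw.continuousOn)
  obtain ⟨Gu, hGuc, hGue⟩ := bs_ext hs.le
    (hu.continuousOn_derivWithin (uniqueDiffOn_Icc hs) le_rfl)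
  obtain ⟨Gw, hGwc, hGwe⟩ := bs_ext hs.le
    (hw.continuousOn_derivWithin (uniqueDiffOn_Icc hs) le_rfl)
  have hdr := bs_deriv_rel (A := A) (B := B) (X := X) hs hu hw hFuc hFue hGue hGwe hrel
  obtain ⟨Su, hSu⟩ : ∃ x : ℝ, x = ∫ x in (0:ℝ)..s, (Fu x)^2 := ⟨_, rfl⟩
  obtain ⟨Sw, hSw⟩ : ∃ x : ℝ, x = ∫ x in (0:ℝ)..s, (Fw x)^2 := ⟨_, rfl⟩
  obtain ⟨SGu, hSGu⟩ : ∃ x : ℝ, x = ∫ x in (0:ℝ)..s, (Gu x)^2 := ⟨_, rfl⟩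
  obtain ⟨SGw, hSGw⟩ : ∃ x : ℝ, x = ∫ x in (0:ℝ)..s, (Gw x)^2 := ⟨_, rfl⟩
  have hSunn : 0 ≤ Su := by
    rw [hSu]; exact intervalIntegral.integral_nonneg hs.le (fun x _ => sq_nonneg _)
  have hSwnn : 0 ≤ Sw := by
    rw [hSw]; exact intervalIntegral.integral_nonneg hs.le (fun x _ => sq_nonneg _)
  have hSGunn : 0 ≤ SGu := by
    rw [hSGu]; exact intervalIntegral.integral_nonneg hs.le (fun x _ => sq_nonneg _)
  have hSGwnn : 0 ≤ SGw := by
    rw [hSGw]; exact intervalIntegral.integral_nonneg hs.le (fun x _ => sq_nonneg _)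
  have Iu : (∫ x in (0:ℝ)..s, (u x)^2) = Su := by
    rw [hSu]
    apply intervalIntegral.integral_congr
    intro x hx
    rw [Set.uIcc_of_le hs.le] at hx
    simp [hFue hx]
  have Iw : (∫ x in (0:ℝ)..s, (w x)^2) = Sw := by
    rw [hSw]
    apply intervalIntegral.integral_congr
    intro x hx
    rw [Set.uIcc_of_le hs.le] at hx
    simp [hFwe hx]
  have IGu : (∫ x in (0:ℝ)..s, (deriv u x)^2) = SGu := by
    rw [hSGu]
    exact bs_integral_congr_Ioo hs.le (fun x hx => by rw [(hdr x hx).2.1])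
  have IGw : (∫ x in (0:ℝ)..s, (deriv w x)^2) = SGw := by
    rw [hSGw]
    exact bs_integral_congr_Ioo hs.le (fun x hx => by rw [(hdr x hx).1])
  rw [Iu, Iw, IGu, IGw]
  have hrelF : ∀ x ∈ Set.Icc (0:ℝ) s,
      Fw x = Fu x - A * (∫ y in x..s, (x - y) * Fu y) - B * (x - s) * X := by
    intro x hx
    have e1 : (∫ y in x..s, (x - y) * u y) = ∫ y in x..s, (x - y) * Fu y := by
      apply intervalIntegral.integral_congr
      intro y hy
      rw [Set.uIcc_of_le hx.2] at hy
      simp [hFue ⟨le_trans hx.1 hy.1, hy.2⟩]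
    rw [← hFwe hx, hrel x hx, hFue hx, e1]
  have hker : ∀ x ∈ Set.Icc (0:ℝ) s,
      |∫ y in x..s, (x - y) * Fu y| ≤ s_r * ∫ y in x..s, |Fu y| := by
    intro x hx
    calc |∫ y in x..s, (x - y) * Fu y| ≤ ∫ y in x..s, |(x - y) * Fu y| :=
          intervalIntegral.abs_integral_le_integral_abs hx.2
      _ ≤ ∫ y in x..s, s_r * |Fu y| := by
          apply intervalIntegral.integral_mono_on hx.2
            (((continuous_const.sub continuous_id).mul hFuc).abs.intervalIntegrable x s)
            ((continuous_const.mul hFuc.abs).intervalIntegrable x s)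
          intro y hy
          show |(x - y) * Fu y| ≤ s_r * |Fu y|; rw [abs_mul]
          have h2 : |x - y| ≤ s_r := by
            rw [abs_le]
            constructor
            · linarith [hy.1, hy.2, hx.1, hssr]
            · linarith [hy.1, hy.2, hx.1, hssr]
          exact mul_le_mul_of_nonneg_right h2 (abs_nonneg _)
      _ = s_r * ∫ y in x..s, |Fu y| := intervalIntegral.integral_const_mul _ _
  have hcs := bs_cs_int hssr hFuc hSu
  have habsint_nn : ∀ x ∈ Set.Icc (0:ℝ) s, 0 ≤ ∫ y in x..s, |Fu y| :=
    fun x hx => intervalIntegral.integral_nonneg hx.2 (fun y _ => abs_nonneg _)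
  constructor
  · -- LOWER BOUND
    have hderFw : ∀ x ∈ Set.Ioo (0:ℝ) s, HasDerivAt Fw (Gw x) x := by
      intro x hx
      have hxIcc : x ∈ Set.Icc (0:ℝ) s := ⟨hx.1.le, hx.2.le⟩
      have hnx : Set.Icc (0:ℝ) s ∈ nhds x := Icc_mem_nhds hx.1 hx.2
      have hdw : DifferentiableAt ℝ w x :=
        ((hw.differentiableOn one_ne_zero) x hxIcc).differentiableAt hnx
      have h1 : HasDerivAt w (Gw x) x := (hdr x hx).1 ▸ hdw.hasDerivAt
      exact h1.congr_of_eventuallyEq (Filter.eventually_of_mem hnx (fun y hy => (hFwe hy).symm))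
    have agm := bs_agmon hs hFwc hGwc hderFw
    obtain ⟨T, hT⟩ : ∃ x : ℝ, x = Sw + s_r * (Sw + SGw) := ⟨_, rfl⟩
    have hTnn : 0 ≤ T := by
      rw [hT]
      exact add_nonneg hSwnn (mul_nonneg hsr.le (add_nonneg hSwnn hSGwnn))
    have hFwbd : ∀ x ∈ Set.Icc (0:ℝ) s, |Fw x| ≤ Real.sqrt (T / s) := by
      intro x hx
      apply Real.le_sqrt_of_sq_le
      rw [sq_abs, le_div_iff₀ hs]
      have h1 := agm x hx
      rw [← hSw, ← hSGw] at h1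
      have h2 : s * (Sw + SGw) ≤ s_r * (Sw + SGw) :=
        mul_le_mul_of_nonneg_right hssr (add_nonneg hSwnn hSGwnn)
      have h3 : T = Sw + s_r * (Sw + SGw) := hT
      linarith only [h1, h2, h3]
    obtain ⟨Gc, hGc⟩ : ∃ x : ℝ, x = Real.sqrt (T / s) + B * s_r * |X| := ⟨_, rfl⟩
    have hGcnn : 0 ≤ Gc := by
      rw [hGc]
      exact add_nonneg (Real.sqrt_nonneg _)
        (mul_nonneg (mul_nonneg hBpos.le hsr.le) (abs_nonneg _))
    have hrelG : ∀ x ∈ Set.Icc (0:ℝ) s, |Fu x| ≤ Gc + K * ∫ y in x..s, |Fu y| := by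
      intro x hx
      have h1 := hrelF x hx
      have h2 : Fu x = Fw x + A * (∫ y in x..s, (x - y) * Fu y) + B * (x - s) * X := by
        rw [h1]; ring
      have h3 : |B * (x - s) * X| ≤ B * s_r * |X| := by
        rw [abs_mul, abs_mul, abs_of_nonneg hBpos.le]
        apply mul_le_mul_of_nonneg_right _ (abs_nonneg _)
        apply mul_le_mul_of_nonneg_left _ hBpos.le
        rw [abs_sub_comm, abs_of_nonneg (by linarith [hx.2] : (0:ℝ) ≤ s - x)]
        linarith [hx.1]
      have h4 : |A * (∫ y in x..s, (x - y) * Fu y)| ≤ K * ∫ y in x..s, |Fu y| := by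
        rw [abs_mul, abs_of_nonneg hApos.le, hK]
        calc A * |∫ y in x..s, (x - y) * Fu y| ≤ A * (s_r * ∫ y in x..s, |Fu y|) :=
              mul_le_mul_of_nonneg_left (hker x hx) hApos.le
          _ = A * s_r * ∫ y in x..s, |Fu y| := by ring
      calc |Fu x| ≤ |Fw x| + |A * (∫ y in x..s, (x - y) * Fu y)| + |B * (x - s) * X| := by
            rw [h2]; exact (abs_add_le _ _).trans (add_le_add_left (abs_add_le _ _) _)
        _ ≤ Gc + K * ∫ y in x..s, |Fu y| := by
            rw [hGc]; linarith only [hFwbd x hx, h3, h4]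
    have gron := bs_gronwall hs hKpos hGcnn hFuc hrelG
    obtain ⟨M, hM⟩ : ∃ x : ℝ, x = Gc * E := ⟨_, rfl⟩
    have hMnn : 0 ≤ M := by rw [hM]; exact mul_nonneg hGcnn hEpos.le
    have hFubd : ∀ x ∈ Set.Icc (0:ℝ) s, |Fu x| ≤ M := by
      intro x hx
      refine (gron x hx).trans ?_
      rw [hM, hE]
      exact mul_le_mul_of_nonneg_left
        (Real.exp_le_exp.mpr (mul_le_mul_of_nonneg_left hssr hKpos.le)) hGcnn
    have F1 : Su ≤ s * M^2 := by
      have h1 : Su ≤ ∫ x in (0:ℝ)..s, M^2 := by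
        rw [hSu]
        apply intervalIntegral.integral_mono_on hs.le ((hFuc.pow 2).intervalIntegrable 0 s)
          intervalIntegrable_const
        intro x hx
        exact bs_sq_le hMnn (hFubd x hx)
      have h2 : (∫ x in (0:ℝ)..s, M^2) = s * M^2 := by
        rw [intervalIntegral.integral_const]; simp
      linarith
    have hJb : ∀ x ∈ Set.Ioo (0:ℝ) s, |∫ y in x..s, Fu y| ≤ s_r * M := by
      intro x hx
      have hxIcc : x ∈ Set.Icc (0:ℝ) s := ⟨hx.1.le, hx.2.le⟩
      calc |∫ y in x..s, Fu y| ≤ ∫ y in x..s, |Fu y| :=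
            intervalIntegral.abs_integral_le_integral_abs hx.2.le
        _ ≤ ∫ y in x..s, M := by
            apply intervalIntegral.integral_mono_on hx.2.le
              (hFuc.abs.intervalIntegrable x s) intervalIntegrable_const
            intro y hy
            exact hFubd y ⟨le_trans hxIcc.1 hy.1, hy.2⟩
        _ = (s - x) * M := by rw [intervalIntegral.integral_const]; simp
        _ ≤ s_r * M := mul_le_mul_of_nonneg_right (by linarith [hx.1, hssr]) hMnn
    have F2 : SGu ≤ 3 * SGw + s * (3*K^2*M^2 + 3*B^2*X^2) := by
      have h := bs_int_const_bound hs (C := 3*K^2*M^2 + 3*B^2*X^2) (by positivity) hGwc hGuc ?_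
      · rw [← hSGu, ← hSGw] at h
        exact h
      intro x hx
      have h1 := (hdr x hx).2.2
      have h2 : Gu x = Gw x + A * (∫ y in x..s, Fu y) + B * X := by rw [h1]; ring
      have hb2 : (A * (∫ y in x..s, Fu y))^2 ≤ K^2 * M^2 := by
        have hz : |A * (∫ y in x..s, Fu y)| ≤ K * M := by
          rw [abs_mul, abs_of_nonneg hApos.le, hK]
          calc A * |∫ y in x..s, Fu y| ≤ A * (s_r * M) :=
                mul_le_mul_of_nonneg_left (hJb x hx) hApos.le
            _ = A * s_r * M := by ring
        have := bs_sq_le (mul_nonneg hKpos.le hMnn) hz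
        calc (A * (∫ y in x..s, Fu y))^2 ≤ (K*M)^2 := this
          _ = K^2 * M^2 := by ring
      have hd2 : (B * X)^2 ≤ B^2 * X^2 := by rw [mul_pow]
      have h3 := bs_sq3' (Gw x) (A * (∫ y in x..s, Fu y)) (B * X)
      rw [← h2] at h3
      linarith only [h3, hb2, hd2]
    -- combine lower bound
    have F3 : s * Gc^2 ≤ 2*T + 2*B^2*s_r^3*X^2 := by
      have hsq : Real.sqrt (T / s) ^ 2 = T / s := Real.sq_sqrt (div_nonneg hTnn hs.le)
      have habs : (B*s_r*|X|)^2 = B^2*s_r^2*X^2 := by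
        rw [mul_pow, mul_pow, sq_abs]
      have h1 : Gc^2 ≤ 2 * (T/s) + 2*(B^2*s_r^2*X^2) := by
        rw [hGc]
        have h0 := bs_sq2 (Real.sqrt (T/s)) (B*s_r*|X|)
        rw [hsq, habs] at h0
        linarith only [h0]
      have h2 : s * Gc^2 ≤ s * (2*(T/s) + 2*(B^2*s_r^2*X^2)) :=
        mul_le_mul_of_nonneg_left h1 hs.le
      have h3 : s * (2*(T/s) + 2*(B^2*s_r^2*X^2)) = 2*T + s*(2*B^2*s_r^2*X^2) := by
        field_simp
      have h4 : s * (2*B^2*s_r^2*X^2) ≤ s_r * (2*B^2*s_r^2*X^2) :=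
        mul_le_mul_of_nonneg_right hssr (by positivity)
      have h5 : s_r * (2*B^2*s_r^2*X^2) = 2*B^2*s_r^3*X^2 := by ring
      linarith only [h2, h3, h4, h5]
    have F4 : T ≤ (1 + s_r) * (Sw + SGw) := by
      rw [hT]
      have h : (1+s_r)*(Sw+SGw) = Sw + SGw + s_r*(Sw+SGw) := by ring
      linarith only [h, hSGwnn]
    have G1 : s * M^2 = E^2 * (s * Gc^2) := by rw [hM]; ring
    have G2 : E^2 * (s * Gc^2) ≤ E^2 * (2*T + 2*B^2*s_r^3*X^2) :=
      mul_le_mul_of_nonneg_left F3 (sq_nonneg E)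
    have G2' : s * M^2 ≤ 2*E^2*T + 2*E^2*B^2*s_r^3*X^2 := by linarith only [G1, G2]
    have G3 : s * (3*K^2*M^2 + 3*B^2*X^2) ≤ 3*K^2*(s*M^2) + 3*B^2*s_r*X^2 := by
      have h1 : s * (3*B^2*X^2) ≤ s_r * (3*B^2*X^2) :=
        mul_le_mul_of_nonneg_right hssr (by positivity)
      linarith only [h1]
    have P2 : 3*K^2*(s*M^2) ≤ 3*K^2*(2*E^2*T + 2*E^2*B^2*s_r^3*X^2) :=
      mul_le_mul_of_nonneg_left G2' (by positivity)
    have P4 : 2*E^2*T ≤ 2*E^2*((1+s_r)*(Sw+SGw)) :=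
      mul_le_mul_of_nonneg_left F4 (by positivity)
    have P5 : 6*K^2*E^2*T ≤ 6*K^2*E^2*((1+s_r)*(Sw+SGw)) :=
      mul_le_mul_of_nonneg_left F4 (by positivity)
    have key : Su + SGu + X^2 ≤ D1*(Sw+SGw) + D2*X^2 := by
      rw [hD1, hD2]
      linarith only [F1, F2, G3, G2', P2, P4, P5, hSwnn]
    have hexpand : Cl * (Sw + SGw + p*X^2)
        = D1*(Sw+SGw) + D2*X^2 + ((D2/p)*(Sw+SGw) + (D1*p)*X^2) := by
      rw [hCl]; field_simp; ring
    have e1 : 0 ≤ (D2/p)*(Sw+SGw) :=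
      mul_nonneg (div_nonneg hD2pos.le hp.le) (add_nonneg hSwnn hSGwnn)
    have e2 : 0 ≤ (D1*p)*X^2 := mul_nonneg (mul_nonneg hD1pos.le hp.le) (sq_nonneg X)
    have final : Su + SGu + X^2 ≤ Cl * (Sw + SGw + p*X^2) := by
      linarith only [key, hexpand, e1, e2]
    rw [div_mul_eq_mul_div, div_le_iff₀ hClpos, one_mul]
    linarith only [final]
  · -- UPPER BOUND
    have hFwptw : ∀ x ∈ Set.Ioo (0:ℝ) s,
        (Fw x)^2 ≤ 3 * (Fu x)^2 + (3*A^2*s_r^2*(s_r*Su) + 3*B^2*s_r^2*X^2) := by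
      intro x hx
      have hxIcc : x ∈ Set.Icc (0:ℝ) s := ⟨hx.1.le, hx.2.le⟩
      have h1 := hrelF x hxIcc
      have hP2 : (A * (∫ y in x..s, (x - y) * Fu y))^2 ≤ A^2*s_r^2*(s_r*Su) := by
        have hz : |A * (∫ y in x..s, (x - y) * Fu y)|
            ≤ A * (s_r * ∫ y in x..s, |Fu y|) := by
          rw [abs_mul, abs_of_nonneg hApos.le]
          exact mul_le_mul_of_nonneg_left (hker x hxIcc) hApos.le
        have h2 := bs_sq_le (mul_nonneg hApos.le
          (mul_nonneg hsr.le (habsint_nn x hxIcc))) hz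
        have h3 : (A * (s_r * ∫ y in x..s, |Fu y|))^2
            = A^2*s_r^2*(∫ y in x..s, |Fu y|)^2 := by ring
        have h4 := hcs x hxIcc
        have h5 : A^2*s_r^2*(∫ y in x..s, |Fu y|)^2 ≤ A^2*s_r^2*(s_r*Su) :=
          mul_le_mul_of_nonneg_left h4 (by positivity)
        linarith only [h2, h3.le, h4, h5]
      have hQ2 : (B * (x - s) * X)^2 ≤ B^2*s_r^2*X^2 := by
        have hz : |B * (x - s) * X| ≤ B * s_r * |X| := by
          rw [abs_mul, abs_mul, abs_of_nonneg hBpos.le]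
          apply mul_le_mul_of_nonneg_right _ (abs_nonneg _)
          apply mul_le_mul_of_nonneg_left _ hBpos.le
          rw [abs_sub_comm, abs_of_nonneg (by linarith [hxIcc.2] : (0:ℝ) ≤ s - x)]
          linarith [hxIcc.1]
        have h2 := bs_sq_le (mul_nonneg (mul_nonneg hBpos.le hsr.le) (abs_nonneg X)) hz
        have h3 : (B * s_r * |X|)^2 = B^2*s_r^2*X^2 := by
          rw [mul_pow, mul_pow, sq_abs]
        linarith only [h2, h3.le]
      have h3 := bs_sq3 (Fu x) (A * (∫ y in x..s, (x - y) * Fu y)) (B * (x - s) * X)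
      rw [← h1] at h3
      linarith only [h3, hP2, hQ2]
    have U1 : Sw ≤ 3 * Su + s * (3*A^2*s_r^2*(s_r*Su) + 3*B^2*s_r^2*X^2) := by
      have hCnn : (0:ℝ) ≤ 3*A^2*s_r^2*(s_r*Su) + 3*B^2*s_r^2*X^2 := by
        have : (0:ℝ) ≤ 3*A^2*s_r^2*(s_r*Su) :=
          mul_nonneg (by positivity) (mul_nonneg hsr.le hSunn)
        positivity
      have h := bs_int_const_bound hs hCnn hFuc hFwc hFwptw
      rw [← hSw, ← hSu] at h
      exact h
    have hGwptw : ∀ x ∈ Set.Ioo (0:ℝ) s,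
        (Gw x)^2 ≤ 3 * (Gu x)^2 + (3*A^2*(s_r*Su) + 3*B^2*X^2) := by
      intro x hx
      have hxIcc : x ∈ Set.Icc (0:ℝ) s := ⟨hx.1.le, hx.2.le⟩
      have h1 := (hdr x hx).2.2
      have hP2 : (A * (∫ y in x..s, Fu y))^2 ≤ A^2*(s_r*Su) := by
        have hz : |A * (∫ y in x..s, Fu y)| ≤ A * (∫ y in x..s, |Fu y|) := by
          rw [abs_mul, abs_of_nonneg hApos.le]
          exact mul_le_mul_of_nonneg_left
            (intervalIntegral.abs_integral_le_integral_abs hx.2.le) hApos.le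
        have h2 := bs_sq_le (mul_nonneg hApos.le (habsint_nn x hxIcc)) hz
        have h3 : (A * (∫ y in x..s, |Fu y|))^2 = A^2*(∫ y in x..s, |Fu y|)^2 := by ring
        have h4 := hcs x hxIcc
        have h5 : A^2*(∫ y in x..s, |Fu y|)^2 ≤ A^2*(s_r*Su) :=
          mul_le_mul_of_nonneg_left h4 (sq_nonneg A)
        linarith only [h2, h3.le, h5]
      have hQ2 : (B * X)^2 ≤ B^2*X^2 := by rw [mul_pow]
      have h3 := bs_sq3 (Gu x) (A * (∫ y in x..s, Fu y)) (B * X)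
      rw [← h1] at h3
      linarith only [h3, hP2, hQ2]
    have U2 : SGw ≤ 3 * SGu + s * (3*A^2*(s_r*Su) + 3*B^2*X^2) := by
      have hCnn : (0:ℝ) ≤ 3*A^2*(s_r*Su) + 3*B^2*X^2 := by
        have : (0:ℝ) ≤ 3*A^2*(s_r*Su) :=
          mul_nonneg (by positivity) (mul_nonneg hsr.le hSunn)
        positivity
      have h := bs_int_const_bound hs hCnn hGuc hGwc hGwptw
      rw [← hSGw, ← hSGu] at h
      exact h
    -- lift s to s_r in U1, U2
    have U1' : Sw ≤ 3 * Su + 3*A^2*s_r^4*Su + 3*B^2*s_r^3*X^2 := by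
      have h1 : s * (3*A^2*s_r^2*(s_r*Su) + 3*B^2*s_r^2*X^2)
          ≤ s_r * (3*A^2*s_r^2*(s_r*Su) + 3*B^2*s_r^2*X^2) := by
        apply mul_le_mul_of_nonneg_right hssr
        have : (0:ℝ) ≤ 3*A^2*s_r^2*(s_r*Su) :=
          mul_nonneg (by positivity) (mul_nonneg hsr.le hSunn)
        positivity
      linarith only [U1, h1]
    have U2' : SGw ≤ 3 * SGu + 3*A^2*s_r^2*Su + 3*B^2*s_r*X^2 := by
      have h1 : s * (3*A^2*(s_r*Su) + 3*B^2*X^2)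
          ≤ s_r * (3*A^2*(s_r*Su) + 3*B^2*X^2) := by
        apply mul_le_mul_of_nonneg_right hssr
        have : (0:ℝ) ≤ 3*A^2*(s_r*Su) :=
          mul_nonneg (by positivity) (mul_nonneg hsr.le hSunn)
        positivity
      linarith only [U2, h1]
    -- final
    have c1 : (3 + 3*A^2*s_r^4 + 3*A^2*s_r^2) * Su ≤ δu * Su := by
      apply mul_le_mul_of_nonneg_right _ hSunn
      have hdiff : δu = (3 + 3*A^2*s_r^4 + 3*A^2*s_r^2) + (3 + 3*B^2*s_r^3 + 3*B^2*s_r + p) := by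
        rw [hδu]; ring
      have h1 : (0:ℝ) ≤ 3*B^2*s_r^3 := by positivity
      have h2 : (0:ℝ) ≤ 3*B^2*s_r := by positivity
      linarith only [hdiff, h1, h2, hp.le]
    have c2 : 3 * SGu ≤ δu * SGu := by
      apply mul_le_mul_of_nonneg_right _ hSGunn
      have h1 : (0:ℝ) ≤ 3*A^2*s_r^4 := by positivity
      have h2 : (0:ℝ) ≤ 3*A^2*s_r^2 := by positivity
      have h3 : (0:ℝ) ≤ 3*B^2*s_r^3 := by positivity
      have h4 : (0:ℝ) ≤ 3*B^2*s_r := by positivity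
      rw [hδu]; linarith only [h1, h2, h3, h4, hp.le]
    have c3 : (3*B^2*s_r^3 + 3*B^2*s_r + p) * X^2 ≤ δu * X^2 := by
      apply mul_le_mul_of_nonneg_right _ (sq_nonneg X)
      have h1 : (0:ℝ) ≤ 3*A^2*s_r^4 := by positivity
      have h2 : (0:ℝ) ≤ 3*A^2*s_r^2 := by positivity
      rw [hδu]; linarith only [h1, h2]
    have hexpand : δu * (Su + SGu + X^2) = δu*Su + δu*SGu + δu*X^2 := by ring
    linarith only [U1', U2', c1, c2, c3, hexpand]
end
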